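/- Let d ≥ 2, let Ψ ∈ ℂ^d be a unit vector with rank-one projector P = Ψ Ψ†, let 0 < λ < 1, set ν = 1 − λ, and let Ω = P + λ(I − P) and Ω̄ = I − Ω. Let k, N be integers with k ≥ 0 and N ≥ k + 1, and let δ be a real number with 0 < δ ≤ B_{N,k}(ν). For each integer 0 ≤ i ≤ k let T_i be the operator on (ℂ^d)^{⊗(N+1)} acting as Ω on the first N−i tensor factors, as Ω̄ on the next i factors, and as the identity on the last factor, and let S_i be the same operator with the last factor replaced by P. For a permutation-invariant density matrix ρ on (ℂ^d)^{⊗(N+1)}, set p_k(ρ) := ∑_{i=0}^{k} C(N,i) tr(T_i ρ) and f_k(ρ) := ∑_{i=0}^{k} C(N,i) tr(S_i ρ). Then the set { f_k(ρ)/p_k(ρ) : ρ a permutation-invariant density matrix on (ℂ^d)^{⊗(N+1)} with p_k(ρ) ≥ δ } has least element 0; that is, the defensive-QSV fidelity certificate satisfies F^D_λ(k,N,δ) = 0 whenever δ ≤ B_{N,k}(ν). -/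

import Mathlib

open Matrix ComplexOrder

/-- The binomial cumulative distribution function. -/
noncomputable def binomCDF (z k : ℕ) (p : ℝ) : ℝ :=
  ∑ j ∈ Finset.range (k + 1), (z.choose j : ℝ) * p ^ j * (1 - p) ^ (z - j)

/-- The tensor product of a family of `d × d` matrices, as a matrix whose rows and
columns are indexed by functions `Fin n → Fin d`. -/
def tensorFamily {n d : ℕ} (A : Fin n → Matrix (Fin d) (Fin d) ℂ) :
    Matrix (Fin n → Fin d) (Fin n → Fin d) ℂ :=
  Matrix.of fun f g => ∏ j, A j (f j) (g j)

/-- The operator on `(ℂ^d)^{⊗(N+1)}` acting as `Ω` on the first `N - i` factors,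
as `Ω̄ = 1 - Ω` on the next `i` factors, and as `E` on the last factor. -/
def testOp {d : ℕ} (N i : ℕ) (Ω E : Matrix (Fin d) (Fin d) ℂ) :
    Matrix (Fin (N + 1) → Fin d) (Fin (N + 1) → Fin d) ℂ :=
  tensorFamily fun j =>
    if (j : ℕ) < N - i then Ω else if (j : ℕ) < N then 1 - Ω else E

lemma tensorFamily_mul {n d : ℕ} (A B : Fin n → Matrix (Fin d) (Fin d) ℂ) :
    tensorFamily A * tensorFamily B = tensorFamily (fun j => A j * B j) := by
  ext f g
  simp only [tensorFamily, Matrix.mul_apply, Matrix.of_apply, ← Finset.prod_mul_distrib]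
  exact (Fintype.prod_sum (fun j m => A j (f j) m * B j m (g j))).symm

lemma tensorFamily_conjTranspose {n d : ℕ} (A : Fin n → Matrix (Fin d) (Fin d) ℂ) :
    (tensorFamily A)ᴴ = tensorFamily (fun j => (A j)ᴴ) := by
  ext f g
  simp [tensorFamily, Matrix.conjTranspose_apply, star_prod]

lemma tensorFamily_trace {n d : ℕ} (A : Fin n → Matrix (Fin d) (Fin d) ℂ) :
    (tensorFamily A).trace = ∏ j, (A j).trace := by
  simp only [Matrix.trace, Matrix.diag, tensorFamily, Matrix.of_apply]
  exact (Fintype.prod_sum (fun j m => A j m m)).symm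

section
open scoped MatrixOrder

theorem Matrix.posSemidef_iff_eq_transpose_mul_self {n : Type*} [Fintype n] [DecidableEq n]
    {A : Matrix n n ℂ} : A.PosSemidef ↔ ∃ B : Matrix n n ℂ, A = Bᴴ * B := by
  constructor
  · intro hA
    obtain ⟨B, rfl⟩ := CStarAlgebra.nonneg_iff_eq_star_mul_self.mp hA.nonneg
    exact ⟨B, rfl⟩
  · rintro ⟨B, rfl⟩
    exact posSemidef_conjTranspose_mul_self B

end

lemma tensorFamily_posSemidef {n d : ℕ} (A : Fin n → Matrix (Fin d) (Fin d) ℂ)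
    (h : ∀ j, (A j).PosSemidef) : (tensorFamily A).PosSemidef := by
  choose B hB using fun j => Matrix.posSemidef_iff_eq_transpose_mul_self.mp (h j)
  refine Matrix.posSemidef_iff_eq_transpose_mul_self.mpr ⟨tensorFamily B, ?_⟩
  rw [tensorFamily_conjTranspose, tensorFamily_mul]
  exact congrArg tensorFamily (funext fun j => hB j)

lemma trace_ctms_nonneg {m : Type*} [Fintype m] (M : Matrix m m ℂ) :
    0 ≤ (Mᴴ * M).trace := by
  simp only [Matrix.trace, Matrix.diag, Matrix.mul_apply, Matrix.conjTranspose_apply]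
  exact Finset.sum_nonneg fun _ _ => Finset.sum_nonneg fun _ _ => star_mul_self_nonneg _

lemma trace_mul_psd_nonneg {m : Type*} [Fintype m] [DecidableEq m]
    {S ρ : Matrix m m ℂ} (hS : S.PosSemidef) (hρ : ρ.PosSemidef) :
    0 ≤ (S * ρ).trace := by
  obtain ⟨B, rfl⟩ := Matrix.posSemidef_iff_eq_transpose_mul_self.mp hS
  obtain ⟨C, rfl⟩ := Matrix.posSemidef_iff_eq_transpose_mul_self.mp hρ
  have h := trace_ctms_nonneg (B * Cᴴ)
  rw [Matrix.conjTranspose_mul, Matrix.conjTranspose_conjTranspose] at h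
  calc (0:ℂ) ≤ (C * Bᴴ * (B * Cᴴ)).trace := h
    _ = (Bᴴ * B * (Cᴴ * C)).trace := by
        rw [← Matrix.mul_assoc, Matrix.trace_mul_comm, Matrix.trace_mul_comm (Bᴴ * B)]
        simp only [Matrix.mul_assoc]

lemma vecMulVec_conjTranspose {d : ℕ} (u v : Fin d → ℂ) :
    (Matrix.vecMulVec u v)ᴴ = Matrix.vecMulVec (star v) (star u) := by
  ext i j
  simp [Matrix.vecMulVec_apply, Matrix.conjTranspose_apply, mul_comm]

lemma vecMulVec_mul_vecMulVec {d : ℕ} (a b c e : Fin d → ℂ) :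
    Matrix.vecMulVec a b * Matrix.vecMulVec c e = (b ⬝ᵥ c) • Matrix.vecMulVec a e := by
  ext i j
  simp only [Matrix.mul_apply, Matrix.vecMulVec_apply, Matrix.smul_apply, smul_eq_mul,
    dotProduct, Finset.sum_mul]
  exact Finset.sum_congr rfl fun m _ => by ring

lemma vecMulVec_mulVec {d : ℕ} (w v u : Fin d → ℂ) :
    Matrix.vecMulVec w v *ᵥ u = (v ⬝ᵥ u) • w := by
  ext i
  simp only [Matrix.mulVec, Matrix.vecMulVec_apply, dotProduct, Pi.smul_apply,
    smul_eq_mul, Finset.sum_mul]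
  exact Finset.sum_congr rfl fun m _ => by ring

lemma trace_mul_vecMulVec {d : ℕ} (M : Matrix (Fin d) (Fin d) ℂ) (u v : Fin d → ℂ) :
    (M * Matrix.vecMulVec u v).trace = v ⬝ᵥ (M *ᵥ u) := by
  simp only [Matrix.trace, Matrix.diag, Matrix.mul_apply, Matrix.vecMulVec_apply,
    dotProduct, Matrix.mulVec, Finset.mul_sum]
  exact Finset.sum_congr rfl fun m _ => Finset.sum_congr rfl fun i _ => by ring

lemma prod_if_lt {α : Type*} [CommMonoid α] (a b : α) (m N : ℕ) (hm : m ≤ N) :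
    (∏ j : Fin N, (if (j : ℕ) < m then a else b)) = a ^ m * b ^ (N - m) := by
  rw [Fin.prod_univ_eq_prod_range (fun j => if j < m then a else b) N]
  rw [Finset.prod_ite]
  have h1 : Finset.filter (fun x => x < m) (Finset.range N) = Finset.range m := by
    ext x; simp; omega
  have h2 : Finset.filter (fun x => ¬ x < m) (Finset.range N) = Finset.Ico m N := by
    ext x; simp; omega
  rw [h1, h2, Finset.prod_const, Finset.prod_const, Finset.card_range, Nat.card_Ico]

lemma sum_two {α M : Type*} [Fintype α] [DecidableEq α] [AddCommMonoid M]
    (f : α → M) (a b : α) (hab : a ≠ b) (h : ∀ c, c ≠ a → c ≠ b → f c = 0) :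
    ∑ c, f c = f a + f b := by
  rw [← Finset.sum_pair hab]
  refine (Finset.sum_subset (Finset.subset_univ _) (fun x _ hx => ?_)).symm
  simp only [Finset.mem_insert, Finset.mem_singleton, not_or] at hx
  exact h x hx.1 hx.2

lemma testOp_mul_tensor_trace {d : ℕ} (N i : ℕ) (hi : i ≤ N)
    (Ω E Q : Matrix (Fin d) (Fin d) ℂ) :
    (testOp N i Ω E * tensorFamily (fun _ : Fin (N + 1) => Q)).trace
      = ((Ω * Q).trace) ^ (N - i) * (((1 - Ω) * Q).trace) ^ i * (E * Q).trace := by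
  rw [testOp, tensorFamily_mul, tensorFamily_trace]
  have key : ∀ j : Fin (N + 1),
      ((if (j : ℕ) < N - i then Ω else if (j : ℕ) < N then 1 - Ω else E) * Q).trace
        = (if (j : ℕ) < N - i then (Ω * Q).trace
            else if (j : ℕ) < N then ((1 - Ω) * Q).trace else (E * Q).trace) := by
    intro j; split_ifs <;> rfl
  rw [Finset.prod_congr rfl (fun j _ => key j), Fin.prod_univ_castSucc]
  have hlast : ((Fin.last N : Fin (N + 1)) : ℕ) = N := rfl
  rw [hlast, if_neg (by omega), if_neg (by omega)]
  congr 1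
  have step : ∀ j : Fin N,
      (if ((Fin.castSucc j : Fin (N + 1)) : ℕ) < N - i then (Ω * Q).trace
        else if ((Fin.castSucc j : Fin (N + 1)) : ℕ) < N then ((1 - Ω) * Q).trace
        else (E * Q).trace)
      = (if (j : ℕ) < N - i then (Ω * Q).trace else ((1 - Ω) * Q).trace) := by
    intro j
    have hj : ((Fin.castSucc j : Fin (N + 1)) : ℕ) = (j : ℕ) := rfl
    rw [hj]
    by_cases h : (j : ℕ) < N - i
    · rw [if_pos h, if_pos h]
    · rw [if_neg h, if_neg h, if_pos j.isLt]
  rw [Finset.prod_congr rfl (fun j _ => step j), prod_if_lt _ _ _ _ (Nat.sub_le N i)]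
  congr 2
  omega

theorem DQSV_fidelity_certificate_zero
    (d : ℕ) (hd : 2 ≤ d) (Ψ : Fin d → ℂ)
    (hΨ : star Ψ ⬝ᵥ Ψ = 1)
    (l : ℝ) (hl0 : 0 < l) (hl1 : l < 1)
    (P Ω : Matrix (Fin d) (Fin d) ℂ)
    (hP : P = Matrix.vecMulVec Ψ (star Ψ))
    (hΩ : Ω = P + (l : ℂ) • ((1 : Matrix (Fin d) (Fin d) ℂ) - P))
    (k N : ℕ) (hN : k + 1 ≤ N)
    (δ : ℝ) (hδ0 : 0 < δ) (hδub : δ ≤ binomCDF N k (1 - l)) :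
    IsLeast
      { x : ℝ | ∃ ρ : Matrix (Fin (N + 1) → Fin d) (Fin (N + 1) → Fin d) ℂ,
          ρ.PosSemidef ∧ ρ.trace = 1 ∧
          (∀ π : Equiv.Perm (Fin (N + 1)), ∀ f g : Fin (N + 1) → Fin d,
            ρ (f ∘ π) (g ∘ π) = ρ f g) ∧
          δ ≤ (∑ i ∈ Finset.range (k + 1),
                (N.choose i : ℂ) * (testOp N i Ω 1 * ρ).trace).re ∧
          x = (∑ i ∈ Finset.range (k + 1),
                (N.choose i : ℂ) * (testOp N i Ω P * ρ).trace).re /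
              (∑ i ∈ Finset.range (k + 1),
                (N.choose i : ℂ) * (testOp N i Ω 1 * ρ).trace).re }
      (0 : ℝ) := by
  -- Basic algebraic facts about P and Ω
  have hPH : Pᴴ = P := by rw [hP, vecMulVec_conjTranspose, star_star]
  have hPP : P * P = P := by rw [hP, vecMulVec_mul_vecMulVec, hΨ, one_smul]
  have hAH : ((1 : Matrix (Fin d) (Fin d) ℂ) - P)ᴴ = 1 - P := by
    rw [conjTranspose_sub, conjTranspose_one, hPH]
  have hAA : ((1 : Matrix (Fin d) (Fin d) ℂ) - P) * (1 - P) = 1 - P := by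
    rw [sub_mul, one_mul, mul_sub, mul_one, hPP, sub_self, sub_zero]
  have hPA : P * ((1 : Matrix (Fin d) (Fin d) ℂ) - P) = 0 := by
    rw [mul_sub, mul_one, hPP, sub_self]
  have hAP : ((1 : Matrix (Fin d) (Fin d) ℂ) - P) * P = 0 := by
    rw [sub_mul, one_mul, hPP, sub_self]
  have hPpsd : P.PosSemidef :=
    Matrix.posSemidef_iff_eq_transpose_mul_self.mpr ⟨P, by rw [hPH, hPP]⟩
  have hΩpsd : Ω.PosSemidef := by
    refine Matrix.posSemidef_iff_eq_transpose_mul_self.mpr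
      ⟨P + (Real.sqrt l : ℂ) • (1 - P), ?_⟩
    rw [conjTranspose_add, Matrix.conjTranspose_smul, hPH, hAH, Complex.star_def,
      Complex.conj_ofReal]
    simp only [add_mul, mul_add, Matrix.smul_mul, Matrix.mul_smul, hPP, hPA, hAP, hAA,
      smul_zero, add_zero, zero_add, smul_smul]
    rw [hΩ, ← Complex.ofReal_mul, Real.mul_self_sqrt hl0.le]
  have hObar : (1 : Matrix (Fin d) (Fin d) ℂ) - Ω = ((1 - l : ℝ) : ℂ) • (1 - P) := by
    rw [hΩ]
    have : ((1 - l : ℝ) : ℂ) = 1 - (l : ℂ) := by push_cast; ring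
    rw [this, sub_smul, one_smul, sub_add_eq_sub_sub]
  have hObarpsd : ((1 : Matrix (Fin d) (Fin d) ℂ) - Ω).PosSemidef := by
    refine Matrix.posSemidef_iff_eq_transpose_mul_self.mpr
      ⟨(Real.sqrt (1 - l) : ℂ) • (1 - P), ?_⟩
    rw [Matrix.conjTranspose_smul, hAH, Complex.star_def, Complex.conj_ofReal,
      Matrix.smul_mul, Matrix.mul_smul, hAA, smul_smul, ← Complex.ofReal_mul,
      Real.mul_self_sqrt (by linarith), hObar]
  constructor
  · -- membership: construct the witness state
    -- find a nonzero coordinate of Ψ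
    have hΨne : ∃ a, Ψ a ≠ 0 := by
      by_contra h
      push_neg at h
      rw [show Ψ = 0 from funext h] at hΨ
      simp at hΨ
    obtain ⟨a, ha⟩ := hΨne
    obtain ⟨b, hb⟩ : ∃ b : Fin d, b ≠ a :=
      Fintype.exists_ne_of_one_lt_card (by simpa using lt_of_lt_of_le one_lt_two hd) a
    set Φ₀ : Fin d → ℂ :=
      fun j => if j = a then star (Ψ b) else if j = b then -star (Ψ a) else 0 with hΦ₀
    have hΦ₀a : Φ₀ a = star (Ψ b) := by simp [hΦ₀]
    have hΦ₀b : Φ₀ b = -star (Ψ a) := by simp [hΦ₀, hb]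
    have hΦ₀c : ∀ c, c ≠ a → c ≠ b → Φ₀ c = 0 := by
      intro c h1 h2; simp [hΦ₀, h1, h2]
    set nsq : ℝ := Complex.normSq (Ψ a) + Complex.normSq (Ψ b) with hnsqdef
    have hnsq : 0 < nsq :=
      add_pos_of_pos_of_nonneg (Complex.normSq_pos.mpr ha) (Complex.normSq_nonneg _)
    have hd1 : star Ψ ⬝ᵥ Φ₀ = 0 := by
      rw [dotProduct]
      rw [sum_two (fun c => star Ψ c * Φ₀ c) a b (Ne.symm hb)
        (fun c h1 h2 => by show star Ψ c * Φ₀ c = 0; rw [hΦ₀c c h1 h2, mul_zero])]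
      simp only [Pi.star_apply, hΦ₀a, hΦ₀b]
      ring
    have hd2 : star Φ₀ ⬝ᵥ Φ₀ = (nsq : ℂ) := by
      rw [dotProduct]
      rw [sum_two (fun c => star Φ₀ c * Φ₀ c) a b (Ne.symm hb)
        (fun c h1 h2 => by
          show star Φ₀ c * Φ₀ c = 0
          rw [show star Φ₀ c = star (Φ₀ c) from rfl, hΦ₀c c h1 h2, star_zero, zero_mul])]
      simp only [Pi.star_apply, hΦ₀a, hΦ₀b, star_neg, star_star]
      rw [hnsqdef]
      push_cast
      rw [← Complex.mul_conj, ← Complex.mul_conj]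
      rw [Complex.star_def]
      ring
    set c : ℝ := (Real.sqrt nsq)⁻¹ with hc
    set Φ : Fin d → ℂ := (c : ℂ) • Φ₀ with hΦdef
    have hstarΦ : star Φ = (c : ℂ) • star Φ₀ := by
      rw [hΦdef, star_smul, Complex.star_def, Complex.conj_ofReal]
    have hΦ1 : star Ψ ⬝ᵥ Φ = 0 := by
      rw [hΦdef, dotProduct_smul, hd1, smul_zero]
    have hrr : c * c * nsq = 1 := by
      have hs : Real.sqrt nsq ≠ 0 := by positivity
      rw [hc]
      field_simp
      rw [Real.sq_sqrt hnsq.le]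
    have hΦ2 : star Φ ⬝ᵥ Φ = 1 := by
      rw [hstarΦ, hΦdef, smul_dotProduct, dotProduct_smul, hd2,
        smul_eq_mul, smul_eq_mul, ← mul_assoc, ← Complex.ofReal_mul, ← Complex.ofReal_mul,
        hrr, Complex.ofReal_one]
    set Q := Matrix.vecMulVec Φ (star Φ) with hQ
    have hQH : Qᴴ = Q := by rw [hQ, vecMulVec_conjTranspose, star_star]
    have hQQ : Q * Q = Q := by rw [hQ, _root_.vecMulVec_mul_vecMulVec, hΦ2, one_smul]
    have hQpsd : Q.PosSemidef :=
      Matrix.posSemidef_iff_eq_transpose_mul_self.mpr ⟨Q, by rw [hQH, hQQ]⟩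
    have hPΦ : P *ᵥ Φ = 0 := by rw [hP, _root_.vecMulVec_mulVec, hΦ1, zero_smul]
    have tΩ : (Ω * Q).trace = (l : ℂ) := by
      rw [hQ, trace_mul_vecMulVec, hΩ, Matrix.add_mulVec, Matrix.smul_mulVec,
        Matrix.sub_mulVec, Matrix.one_mulVec, hPΦ, sub_zero, zero_add,
        dotProduct_smul, hΦ2, smul_eq_mul, mul_one]
    have tObar : ((1 - Ω) * Q).trace = ((1 - l : ℝ) : ℂ) := by
      rw [hObar, hQ, Matrix.smul_mul, Matrix.trace_smul, trace_mul_vecMulVec,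
        Matrix.sub_mulVec, Matrix.one_mulVec, hPΦ, sub_zero, hΦ2, smul_eq_mul, mul_one]
    have tP : (P * Q).trace = 0 := by
      rw [hQ, trace_mul_vecMulVec, hPΦ, dotProduct_zero]
    have t1 : ((1 : Matrix (Fin d) (Fin d) ℂ) * Q).trace = 1 := by
      rw [hQ, trace_mul_vecMulVec, Matrix.one_mulVec, hΦ2]
    refine ⟨tensorFamily (fun _ => Q), tensorFamily_posSemidef _ (fun _ => hQpsd),
      ?_, ?_, ?_, ?_⟩
    · rw [tensorFamily_trace]
      have hQt : Q.trace = 1 := by rw [← t1, Matrix.one_mul]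
      simp [hQt]
    · intro π f g
      simp only [tensorFamily, Matrix.of_apply, Function.comp]
      exact Equiv.prod_comp π (fun j => Q (f j) (g j))
    · have hsum : (∑ i ∈ Finset.range (k + 1), (N.choose i : ℂ) *
          (testOp N i Ω 1 * tensorFamily (fun _ : Fin (N + 1) => Q)).trace)
          = ((binomCDF N k (1 - l) : ℝ) : ℂ) := by
        rw [binomCDF, Complex.ofReal_sum]
        apply Finset.sum_congr rfl
        intro i hi
        have hiN : i ≤ N := by
          simp only [Finset.mem_range] at hi; omega
        rw [testOp_mul_tensor_trace N i hiN, tΩ, tObar, t1]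
        push_cast
        ring
      rw [hsum, Complex.ofReal_re]
      exact hδub
    · have hzero : (∑ i ∈ Finset.range (k + 1), (N.choose i : ℂ) *
          (testOp N i Ω P * tensorFamily (fun _ : Fin (N + 1) => Q)).trace) = 0 := by
        apply Finset.sum_eq_zero
        intro i hi
        have hiN : i ≤ N := by
          simp only [Finset.mem_range] at hi; omega
        rw [testOp_mul_tensor_trace N i hiN, tP, mul_zero, mul_zero]
      rw [hzero]
      simp
  · -- lower bound
    rintro x ⟨ρ, hpsd, -, -, hp, rfl⟩
    have hden : 0 < (∑ i ∈ Finset.range (k + 1),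
        (N.choose i : ℂ) * (testOp N i Ω 1 * ρ).trace).re := lt_of_lt_of_le hδ0 hp
    apply div_nonneg _ hden.le
    rw [Complex.re_sum]
    apply Finset.sum_nonneg
    intro i _
    have hSpsd : (testOp N i Ω P).PosSemidef := by
      apply tensorFamily_posSemidef
      intro j
      split_ifs
      · exact hΩpsd
      · exact hObarpsd
      · exact hPpsd
    have htr : 0 ≤ (testOp N i Ω P * ρ).trace := trace_mul_psd_nonneg hSpsd hpsd
    have htr' : 0 ≤ ((testOp N i Ω P * ρ).trace).re := (Complex.le_def.mp htr).1
    rw [Complex.mul_re, Complex.natCast_re, Complex.natCast_im, zero_mul, sub_zero]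
    positivity
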